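/- A collection Π of prime filters of a residuated lattice with the hull-kernel topology is Hausdorff if and only if Π is ⋂Π-closed, i.e., for any distinct P1, P2 ∈ Π there exist a1 ∉ P1 and a2 ∉ P2 with a1 ∨ a2 ∈ ⋂Π. -/
import Mathlib


universe u

class ResiduatedLattice (A : Type u) extends Lattice A, BoundedOrder A where
  mul : A → A → A
  himp : A → A → A
  mul_comm : ∀ x y : A, mul x y = mul y x
  mul_assoc : ∀ x y z : A, mul (mul x y) z = mul x (mul y z)
  mul_top : ∀ x : A, mul x ⊤ = x
  adjoint : ∀ x y z : A, mul x y ≤ z ↔ x ≤ himp y z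

namespace RL

variable {A : Type u} [ResiduatedLattice A]

/-- A filter: a nonempty subset closed under the monoid operation `⊙` and closed
under joins with arbitrary elements. -/
def IsFilter (F : Set A) : Prop :=
  F.Nonempty ∧ (∀ x ∈ F, ∀ y ∈ F, ResiduatedLattice.mul x y ∈ F) ∧
    (∀ x ∈ F, ∀ y : A, x ⊔ y ∈ F)

/-- A prime filter: a proper filter such that `x ⊔ y ∈ P` implies `x ∈ P` or `y ∈ P`. -/
def IsPrime (P : Set A) : Prop :=
  IsFilter P ∧ P ≠ Set.univ ∧ ∀ x y : A, x ⊔ y ∈ P → x ∈ P ∨ y ∈ P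

/-- The filter generated by a subset `X`. -/
def Fgen (X : Set A) : Set A := ⋂₀ {G : Set A | IsFilter G ∧ X ⊆ G}

/-- An `X`-minimal prime filter: a minimal element of the set of prime filters containing `X`. -/
def MinPrimeOver (X : Set A) (P : Set A) : Prop :=
  IsPrime P ∧ X ⊆ P ∧ ∀ Q : Set A, IsPrime Q → X ⊆ Q → Q ⊆ P → Q = P

/-- A minimal prime filter. -/
def MinPrime (P : Set A) : Prop :=
  IsPrime P ∧ ∀ Q : Set A, IsPrime Q → Q ⊆ P → Q = P

/-- The coannihilator of `X` belonging to `F`. -/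
def coann (F : Set A) (X : Set A) : Set A := {a : A | ∀ x ∈ X, x ⊔ a ∈ F}

/-- `X^⊥ = {a | x ⊔ a = ⊤ for all x ∈ X}`. -/
def perp (X : Set A) : Set A := {a : A | ∀ x ∈ X, x ⊔ a = ⊤}

/-- `D_F(P) = {a | (F : a) ⊄ P}`. -/
def DF (F P : Set A) : Set A := {a : A | ¬ coann F {a} ⊆ P}

/-- A `∨`-closed subset: nonempty and closed under joins. -/
def VClosed (C : Set A) : Prop := C.Nonempty ∧ ∀ x ∈ C, ∀ y ∈ C, x ⊔ y ∈ C

end RL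

open RL in
/-- The hull-kernel topology on a collection of prime filters. -/
def HKtop {A : Type u} [ResiduatedLattice A] (𝔓 : Set (Set A)) : TopologicalSpace ↥𝔓 :=
  TopologicalSpace.generateFrom {S : Set ↥𝔓 | ∃ x : A, S = {P : ↥𝔓 | x ∉ P.1}}

theorem hk_t2_iff_closed {A : Type u} [ResiduatedLattice A]
    (𝔓 : Set (Set A)) (h𝔓 : ∀ P ∈ 𝔓, RL.IsPrime P) :
    @T2Space ↥𝔓 (HKtop 𝔓) ↔
      ∀ P1 ∈ 𝔓, ∀ P2 ∈ 𝔓, P1 ≠ P2 →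
        ∃ a1 ∉ P1, ∃ a2 ∉ P2, a1 ⊔ a2 ∈ ⋂₀ 𝔓 := by
  letI : TopologicalSpace ↥𝔓 := HKtop 𝔓
  set d : A → Set ↥𝔓 := fun x => {P : ↥𝔓 | x ∉ P.1} with hd
  have join_mem : ∀ P ∈ 𝔓, ∀ x y : A, x ⊔ y ∈ P ↔ x ∈ P ∨ y ∈ P := by
    intro P hP x y
    obtain ⟨⟨_, _, hclos⟩, _, hprime⟩ := h𝔓 P hP
    constructor
    · exact hprime x y
    · rintro (h | h)
      · exact hclos x h y
      · rw [sup_comm]; exact hclos y h x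
  have bot_not_mem : ∀ P ∈ 𝔓, (⊥ : A) ∉ P := by
    intro P hP hbot
    obtain ⟨⟨_, _, hclos⟩, hne, _⟩ := h𝔓 P hP
    apply hne
    ext y
    simp only [Set.mem_univ, iff_true]
    have := hclos ⊥ hbot y
    rwa [bot_sup_eq] at this
  have d_inter : ∀ x y : A, d x ∩ d y = d (x ⊔ y) := by
    intro x y
    ext P
    simp only [hd, Set.mem_inter_iff, Set.mem_setOf_eq, join_mem P.1 P.2]
    tauto
  have hbasis : TopologicalSpace.IsTopologicalBasis
      {S : Set ↥𝔓 | ∃ x : A, S = d x} := by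
    refine ⟨?_, ?_, rfl⟩
    · rintro t₁ ⟨x, rfl⟩ t₂ ⟨y, rfl⟩ P hP
      exact ⟨d (x ⊔ y), ⟨x ⊔ y, rfl⟩, by rwa [← d_inter], by rw [← d_inter]⟩
    · apply Set.eq_univ_of_forall
      intro P
      exact Set.mem_sUnion.2 ⟨d ⊥, ⟨⊥, rfl⟩, bot_not_mem P.1 P.2⟩
  constructor
  · intro hT2 P1 hP1 P2 hP2 hne
    have hne' : (⟨P1, hP1⟩ : ↥𝔓) ≠ ⟨P2, hP2⟩ := fun h => hne (congrArg Subtype.val h)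
    obtain ⟨u, v, hu, hv, hxu, hyv, huv⟩ := t2_separation hne'
    obtain ⟨t₁, ⟨a1, rfl⟩, hx1, hsub1⟩ :=
      hbasis.mem_nhds_iff.mp (hu.mem_nhds hxu)
    obtain ⟨t₂, ⟨a2, rfl⟩, hx2, hsub2⟩ :=
      hbasis.mem_nhds_iff.mp (hv.mem_nhds hyv)
    refine ⟨a1, hx1, a2, hx2, ?_⟩
    intro Q hQ
    rw [join_mem Q hQ]
    by_contra hcon
    push_neg at hcon
    have h1 : (⟨Q, hQ⟩ : ↥𝔓) ∈ d a1 := hcon.1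
    have h2 : (⟨Q, hQ⟩ : ↥𝔓) ∈ d a2 := hcon.2
    exact (huv.ne_of_mem (hsub1 h1) (hsub2 h2)) rfl
  · intro hsep
    refine ⟨fun {x y} hxy => ?_⟩
    obtain ⟨a1, ha1, a2, ha2, hmeet⟩ :=
      hsep x.1 x.2 y.1 y.2 (fun h => hxy (Subtype.ext h))
    refine ⟨d a1, d a2, ?_, ?_, ha1, ha2, ?_⟩
    · exact TopologicalSpace.isOpen_generateFrom_of_mem ⟨a1, rfl⟩
    · exact TopologicalSpace.isOpen_generateFrom_of_mem ⟨a2, rfl⟩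
    · rw [Set.disjoint_iff_inter_eq_empty, d_inter]
      ext Q
      simp only [hd, Set.mem_setOf_eq, Set.mem_empty_iff_false, iff_false, not_not]
      exact hmeet Q.1 Q.2
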